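/- Let p be an odd prime, n a positive even integer, s | n, and let F : F_{p^n} → F_{p^s} be a vectorial dual-bent function with F(0) = 0, F(−x) = F(x) for all x, and such that every component function F_c is weakly regular bent with the same sign ε_{F_c} = ε ∈ {±1} for all c ∈ F_{p^s}^*. Then, with D_i = {x ∈ F_{p^n} : F(x) = i}, one has |D_0| = p^{n−s} + ε(p^s − 1)p^{n/2 − s} and |D_i| = p^{n−s} − ε p^{n/2 − s} for every i ∈ F_{p^s}^*. -/

import Mathlib

set_option linter.unusedSectionVars false


open scoped BigOperators Pointwise

noncomputable section

/-- The standard additive character `x ↦ ζ_p^x` of `ZMod p` into `ℂ`. -/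
def ep (p : ℕ) (x : ZMod p) : ℂ :=
  Complex.exp (2 * Real.pi * Complex.I * (x.val : ℂ) / (p : ℂ))

/-- The Walsh transform of `f : V → ZMod p`, with the inner product `⟨a, x⟩ = Tr(a * x)`. -/
def walsh (p : ℕ) {V : Type*} [CommRing V] [Fintype V] [Algebra (ZMod p) V]
    (f : V → ZMod p) (a : V) : ℂ :=
  ∑ x : V, ep p (f x - (Algebra.trace (ZMod p) V) (a * x))

/-- `f` is bent: `|W_f(a)| = √(card V)` for all `a`. -/
def IsBent (p : ℕ) {V : Type*} [CommRing V] [Fintype V] [Algebra (ZMod p) V]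
    (f : V → ZMod p) : Prop :=
  ∀ a : V, ‖walsh p f a‖ = Real.sqrt (Fintype.card V)

/-- The component function `F_c = Tr^s_1(c ⬝ F(·))` of a vectorial function. -/
def comp (p : ℕ) {V K : Type*} [CommRing K] [Algebra (ZMod p) K]
    (F : V → K) (c : K) : V → ZMod p :=
  fun x => (Algebra.trace (ZMod p) K) (c * F x)

/-- `D` is a `(v, k, λ, μ)` partial difference set in the additive group `G`. -/
def IsPDS {G : Type*} [AddGroup G] (D : Set G) (v k lam mu : ℚ) : Prop :=
  (Nat.card G : ℚ) = v ∧ (Nat.card D : ℚ) = k ∧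
  ∀ g : G, g ≠ 0 →
    (g ∈ D → (Nat.card {xy : D × D // (xy.1 : G) - (xy.2 : G) = g} : ℚ) = lam) ∧
    (g ∉ D → (Nat.card {xy : D × D // (xy.1 : G) - (xy.2 : G) = g} : ℚ) = mu)

namespace EpAux

variable (p : ℕ) [Fact p.Prime]

lemma hprim : IsPrimitiveRoot (Complex.exp (2 * Real.pi * Complex.I / p)) p :=
  Complex.isPrimitiveRoot_exp p (Nat.Prime.ne_zero Fact.out)

lemma ep_eq_pow (x : ZMod p) :
    ep p x = Complex.exp (2 * Real.pi * Complex.I / p) ^ x.val := by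
  rw [← Complex.exp_nat_mul, ep]
  ring_nf

lemma ep_zero : ep p 0 = 1 := by
  have : ((0 : ZMod p)).val = 0 := ZMod.val_zero
  rw [ep_eq_pow, this, pow_zero]

lemma ep_add (a b : ZMod p) : ep p (a + b) = ep p a * ep p b := by
  haveI : NeZero p := ⟨(Fact.out : p.Prime).ne_zero⟩
  rw [ep_eq_pow, ep_eq_pow, ep_eq_pow, ← pow_add]
  have h1 : a.val + b.val = (a + b).val + p * ((a.val + b.val) / p) := by
    rw [ZMod.val_add]
    exact (Nat.mod_add_div _ _).symm
  rw [h1, pow_add, pow_mul, (hprim p).pow_eq_one, one_pow, mul_one]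

lemma ep_sub (a b : ZMod p) : ep p (a - b) = ep p a * ep p (-b) := by
  rw [sub_eq_add_neg, ep_add]

lemma ep_ne_one {t : ZMod p} (ht : t ≠ 0) : ep p t ≠ 1 := by
  haveI : NeZero p := ⟨(Fact.out : p.Prime).ne_zero⟩
  rw [ep_eq_pow]
  intro h
  rw [(hprim p).pow_eq_one_iff_dvd] at h
  have := Nat.le_of_dvd (Nat.pos_of_ne_zero (fun h0 => ht (by
    rwa [← ZMod.val_eq_zero]))) h
  exact absurd (ZMod.val_lt t) (not_lt.mpr this)

lemma charp (K : Type*) [Field K] [Algebra (ZMod p) K] : CharP K p := by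
  haveI : CharP (ZMod p) p := ZMod.charP p
  exact charP_of_injective_algebraMap (algebraMap (ZMod p) K).injective p

lemma trace_nondeg (K : Type*) [Field K] [Fintype K] [Algebra (ZMod p) K]
    {y : K} (hy : y ≠ 0) :
    ∃ c : K, Algebra.trace (ZMod p) K (c * y) ≠ 0 := by
  haveI := charp p K
  have hchar : ringChar K = p := ringChar.eq K p
  subst hchar
  obtain ⟨b, hb⟩ := FiniteField.trace_to_zmod_nondegenerate K hy
  exact ⟨b, by rwa [mul_comm]⟩

lemma sum_ep_trace (K : Type*) [Field K] [Fintype K] [Algebra (ZMod p) K]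
    {y : K} (hy : y ≠ 0) :
    ∑ c : K, ep p (Algebra.trace (ZMod p) K (c * y)) = 0 := by
  obtain ⟨c0, hc0⟩ := trace_nondeg p K hy
  set S := ∑ c : K, ep p (Algebra.trace (ZMod p) K (c * y)) with hS
  have key : ep p (Algebra.trace (ZMod p) K (c0 * y)) * S = S := by
    rw [hS, Finset.mul_sum]
    calc ∑ c : K, ep p (Algebra.trace (ZMod p) K (c0 * y)) *
            ep p (Algebra.trace (ZMod p) K (c * y))
        = ∑ c : K, ep p (Algebra.trace (ZMod p) K ((c0 + c) * y)) := by
          refine Finset.sum_congr rfl fun c _ => ?_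
          rw [add_mul, map_add, ep_add]
      _ = ∑ c : K, ep p (Algebra.trace (ZMod p) K (c * y)) :=
          Fintype.sum_equiv (Equiv.addLeft c0)
            (fun c => ep p (Algebra.trace (ZMod p) K ((c0 + c) * y)))
            (fun c => ep p (Algebra.trace (ZMod p) K (c * y)))
            (fun c => rfl)
  by_contra hSne
  have := mul_right_cancel₀ hSne (key.trans (one_mul S).symm)
  exact ep_ne_one p hc0 this

section Parity

variable {V : Type*} [Field V] [Fintype V] [DecidableEq V]

lemma even_card_of_neg_closed (h2 : (2 : V) ≠ 0) (S : Finset V)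
    (hneg : ∀ a ∈ S, -a ∈ S) (h0 : (0 : V) ∉ S) : Even S.card := by
  have hsum : ∑ _x ∈ S, (1 : ZMod 2) = 0 := by
    refine Finset.sum_involution (fun a _ => -a) (fun a ha => by decide)
      (fun a ha _ hcontra => ?_) (fun a ha => hneg a ha) (fun a ha => neg_neg a)
    have ha0 : a ≠ 0 := fun h => h0 (h ▸ ha)
    have hc : -a = a := hcontra
    have : (2 : V) * a = 0 := by
      rw [two_mul]
      nth_rewrite 1 [← hc]
      exact neg_add_cancel a
    rcases mul_eq_zero.mp this with h | h
    · exact h2 h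
    · exact ha0 h
  rw [Finset.sum_const, nsmul_eq_mul, mul_one] at hsum
  have := (ZMod.natCast_eq_zero_iff S.card 2).mp hsum
  exact even_iff_two_dvd.mpr this

lemma parity_fiber_ne (h2 : (2 : V) ≠ 0) (g : V → ZMod p)
    (hsym : ∀ x, g (-x) = g x) (hg0 : g 0 = 0) {j : ZMod p} (hj : j ≠ 0) :
    Even (Finset.filter (fun x => g x = j) Finset.univ).card := by
  refine even_card_of_neg_closed h2 _ (fun a ha => ?_) (fun h => ?_)
  · simp only [Finset.mem_filter, Finset.mem_univ, true_and] at ha ⊢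
    rw [hsym]; exact ha
  · simp only [Finset.mem_filter, Finset.mem_univ, true_and] at h
    exact hj (by rw [← h, hg0])

lemma parity_fiber_zero (h2 : (2 : V) ≠ 0) (g : V → ZMod p)
    (hsym : ∀ x, g (-x) = g x) (hg0 : g 0 = 0) :
    Odd (Finset.filter (fun x => g x = 0) Finset.univ).card := by
  set S := Finset.filter (fun x => g x = 0) Finset.univ with hS
  have h0mem : (0 : V) ∈ S := by
    simp only [hS, Finset.mem_filter, Finset.mem_univ, true_and]; exact hg0
  have hcard : (S.erase 0).card + 1 = S.card := Finset.card_erase_add_one h0mem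
  have heven : Even (S.erase 0).card := by
    refine even_card_of_neg_closed h2 _ (fun a ha => ?_) (Finset.notMem_erase _ _)
    rw [Finset.mem_erase] at ha ⊢
    refine ⟨neg_ne_zero.mpr ha.1, ?_⟩
    have := ha.2
    simp only [hS, Finset.mem_filter, Finset.mem_univ, true_and] at this ⊢
    rw [hsym]; exact this
  rw [← hcard]
  exact heven.add_one

end Parity

lemma key_t_eq_zero (hp : Odd p) (m : ℕ) (ε : ℤ)
    (N : ZMod p → ℕ) (t : ZMod p)
    (hodd : Odd (N 0)) (heven : ∀ j : ZMod p, j ≠ 0 → Even (N j))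
    (hsum : ∑ j : ZMod p, (N j : ℂ) * ep p j = (ε : ℂ) * (p : ℂ) ^ m * ep p t) :
    t = 0 := by
  haveI : NeZero p := ⟨(Fact.out : p.Prime).ne_zero⟩
  have hp2 : p ≠ 2 := by rintro rfl; exact (by decide : ¬ Odd 2) hp
  have hp3 : 3 ≤ p := by
    have h2 := (Fact.out : p.Prime).two_le
    omega
  by_contra ht
  set ζ : ℂ := Complex.exp (2 * Real.pi * Complex.I / p) with hζ
  set P : Polynomial ℚ :=
    (∑ j : ZMod p, Polynomial.C ((N j : ℚ)) * Polynomial.X ^ j.val)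
      - Polynomial.C ((ε : ℚ) * (p : ℚ) ^ m) * Polynomial.X ^ t.val with hP
  have hcoeff : ∀ l : ℕ, l < p →
      P.coeff l = (N ((l : ZMod p)) : ℚ)
        - (if l = t.val then (ε : ℚ) * (p : ℚ) ^ m else 0) := by
    intro l hl
    rw [hP, Polynomial.coeff_sub, Polynomial.finset_sum_coeff]
    congr 1
    · rw [Finset.sum_eq_single ((l : ZMod p))]
      · rw [Polynomial.coeff_C_mul, Polynomial.coeff_X_pow,
          ZMod.val_natCast_of_lt hl, if_pos rfl, mul_one]
      · intro j _ hj
        rw [Polynomial.coeff_C_mul, Polynomial.coeff_X_pow, if_neg, mul_zero]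
        intro hlj
        exact hj (by rw [← ZMod.natCast_rightInverse j, ← hlj])
      · intro h
        exact absurd (Finset.mem_univ _) h
    · rw [Polynomial.coeff_C_mul, Polynomial.coeff_X_pow]
      split_ifs <;> simp
  have haeval : Polynomial.aeval ζ P = 0 := by
    rw [hP, map_sub, map_sum]
    simp only [map_mul, Polynomial.aeval_C, map_pow, Polynomial.aeval_X]
    have hcast : ∀ q : ℚ, algebraMap ℚ ℂ q = (q : ℂ) := fun q => by
      exact eq_ratCast (algebraMap ℚ ℂ) q
    rw [sub_eq_zero]
    calc ∑ j : ZMod p, algebraMap ℚ ℂ ((N j : ℚ)) * ζ ^ j.val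
        = ∑ j : ZMod p, (N j : ℂ) * ep p j := by
          refine Finset.sum_congr rfl fun j _ => ?_
          rw [hcast, ep_eq_pow]; push_cast; rfl
      _ = (ε : ℂ) * (p : ℂ) ^ m * ep p t := hsum
      _ = algebraMap ℚ ℂ ((ε : ℚ)) * algebraMap ℚ ℂ ((p : ℚ)) ^ m * ζ ^ t.val := by
          rw [hcast, hcast, ep_eq_pow]; push_cast; ring
  have hdvd : Polynomial.cyclotomic p ℚ ∣ P := by
    rw [Polynomial.cyclotomic_eq_minpoly_rat (hprim p) (Fact.out : p.Prime).pos]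
    exact minpoly.dvd ℚ ζ haeval
  obtain ⟨Q, hQ⟩ := hdvd
  have htv : t.val ≠ 0 := fun h => ht (by rwa [ZMod.val_eq_zero] at h)
  have hPne : P ≠ 0 := by
    intro h
    have h0 := hcoeff 0 (by omega)
    rw [h, Polynomial.coeff_zero, if_neg (fun hh : (0 : ℕ) = t.val => htv hh.symm),
      sub_zero, Nat.cast_zero] at h0
    have hN0 : N 0 = 0 := by exact_mod_cast h0.symm
    rw [hN0] at hodd
    exact (by decide : ¬ Odd 0) hodd
  have hQne : Q ≠ 0 := fun h => hPne (by rw [hQ, h, mul_zero])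
  have hvle : ∀ j : ZMod p, j.val ≤ p - 1 := fun j => by
    have := ZMod.val_lt j; omega
  have hdegP : P.natDegree ≤ p - 1 := by
    rw [hP]
    refine le_trans (Polynomial.natDegree_sub_le _ _) ?_
    rw [max_le_iff]
    refine ⟨le_trans (Polynomial.natDegree_sum_le _ _) ?_,
      le_trans (Polynomial.natDegree_C_mul_le _ _) ?_⟩
    · rw [Finset.fold_max_le]
      refine ⟨by omega, fun j _ => ?_⟩
      exact le_trans (Polynomial.natDegree_C_mul_le _ _)
        (le_trans (Polynomial.natDegree_X_pow_le _) (hvle j))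
    · exact le_trans (Polynomial.natDegree_X_pow_le _) (hvle t)
  have hdegC : (Polynomial.cyclotomic p ℚ).natDegree = p - 1 := by
    rw [Polynomial.natDegree_cyclotomic, Nat.totient_prime Fact.out]
  have hQdeg : Q.natDegree = 0 := by
    have hmul := Polynomial.natDegree_mul (Polynomial.cyclotomic_ne_zero p ℚ) hQne
    rw [← hQ, hdegC] at hmul
    omega
  have hQC : Q = Polynomial.C (Q.coeff 0) := Polynomial.eq_C_of_natDegree_eq_zero hQdeg
  have hPc : ∀ l : ℕ, l < p → P.coeff l = Q.coeff 0 := by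
    intro l hl
    conv_lhs => rw [hQ, hQC]
    rw [Polynomial.coeff_mul_C, Polynomial.cyclotomic_prime ℚ p,
      Polynomial.finset_sum_coeff]
    rw [Finset.sum_eq_single l]
    · rw [Polynomial.coeff_X_pow, if_pos rfl, one_mul]
    · intro k _ hk
      rw [Polynomial.coeff_X_pow, if_neg (fun hh => hk hh.symm)]
    · intro h
      exact absurd (Finset.mem_range.mpr hl) h
  have e1 : (N 0 : ℚ) = Q.coeff 0 := by
    have h0 := hcoeff 0 (by omega)
    rw [if_neg (fun hh : (0 : ℕ) = t.val => htv hh.symm), sub_zero, Nat.cast_zero,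
      hPc 0 (by omega)] at h0
    exact h0.symm
  set l2 : ℕ := if t.val = 1 then 2 else 1 with hl2
  have hl2cases : l2 = 1 ∨ l2 = 2 := by
    rw [hl2]; split_ifs <;> simp
  have hl2p : l2 < p := by omega
  have hl2t : l2 ≠ t.val := by
    rw [hl2]; split_ifs with h
    · omega
    · omega
  have e2 : (N ((l2 : ℕ) : ZMod p) : ℚ) = Q.coeff 0 := by
    have h2 := hcoeff l2 hl2p
    rw [if_neg hl2t, sub_zero, hPc l2 hl2p] at h2
    exact h2.symm
  have hNN : N 0 = N ((l2 : ℕ) : ZMod p) := by exact_mod_cast e1.trans e2.symm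
  have hl2ne : ((l2 : ℕ) : ZMod p) ≠ 0 := by
    rw [Ne, ZMod.natCast_eq_zero_iff]
    intro hdvd
    have := Nat.le_of_dvd (by omega) hdvd
    omega
  have hEv := heven _ hl2ne
  rw [← hNN] at hEv
  rw [Nat.even_iff] at hEv
  rw [Nat.odd_iff] at hodd
  omega

end EpAux

/-- fiber sizes of a vectorial dual-bent function `F : F_{p^n} → F_{p^s}`
with `F(0) = 0`, `F(-x) = F(x)`, all of whose component functions are weakly regular bent
with the same sign `ε`. -/
theorem statement2
    (p n s : ℕ) [Fact p.Prime] (hp : Odd p) (hn : 0 < n) (hs : 0 < s)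
    (hneven : Even n) (hsn : s ∣ n)
    (Fn Fs : Type) [Field Fn] [Fintype Fn] [Field Fs] [Fintype Fs]
    [Algebra (ZMod p) Fn] [Algebra (ZMod p) Fs]
    (hcardn : Fintype.card Fn = p ^ n) (hcards : Fintype.card Fs = p ^ s)
    (F Fstar : Fn → Fs) (σ : Equiv.Perm Fsˣ)
    (ε : ℤ) (hε : ε = 1 ∨ ε = -1)
    (hF0 : F 0 = 0) (hFsym : ∀ x : Fn, F (-x) = F x)
    -- `F^*` is vectorial bent
    (hFstarBent : ∀ c : Fsˣ, IsBent p (comp p Fstar (c : Fs)))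
    -- every component `F_c` is weakly regular bent with sign `ε` and dual `(F^*)_{σ(c)}`
    (hdual : ∀ (c : Fsˣ) (a : Fn),
      walsh p (comp p F (c : Fs)) a
        = (ε : ℂ) * (p : ℂ) ^ (n / 2) * ep p (comp p Fstar ((σ c : Fsˣ) : Fs) a)) :
    (Nat.card {x : Fn // F x = 0} : ℚ)
        = (p : ℚ) ^ ((n : ℤ) - (s : ℤ))
          + (ε : ℚ) * ((p : ℚ) ^ (s : ℤ) - 1) * (p : ℚ) ^ (((n / 2 : ℕ) : ℤ) - (s : ℤ))
    ∧ ∀ i : Fs, i ≠ 0 →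
      (Nat.card {x : Fn // F x = i} : ℚ)
        = (p : ℚ) ^ ((n : ℤ) - (s : ℤ))
          - (ε : ℚ) * (p : ℚ) ^ (((n / 2 : ℕ) : ℤ) - (s : ℤ)) := by
  classical
  have hppos : 0 < p := (Fact.out : p.Prime).pos
  have hp2 : p ≠ 2 := by rintro rfl; exact (by decide : ¬ Odd 2) hp
  have hp3 : 3 ≤ p := by
    have := (Fact.out : p.Prime).two_le; omega
  -- characteristic of Fn
  haveI hchFn : CharP Fn p := EpAux.charp p Fn
  have h2 : (2 : Fn) ≠ 0 := by
    intro h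
    have h2' : ((2 : ℕ) : Fn) = 0 := by exact_mod_cast h
    have := (CharP.cast_eq_zero_iff Fn p 2).mp h2'
    have := Nat.le_of_dvd (by omega) this
    omega
  -- Step C: the Walsh value at 0
  have hW0 : ∀ c : Fsˣ,
      ∑ x : Fn, ep p (comp p F (c : Fs) x) = (ε : ℂ) * (p : ℂ) ^ (n / 2) := by
    intro c
    have hgsym : ∀ x : Fn, comp p F (c : Fs) (-x) = comp p F (c : Fs) x := by
      intro x; unfold comp; rw [hFsym]
    have hg0 : comp p F (c : Fs) 0 = 0 := by
      unfold comp; rw [hF0, mul_zero, map_zero]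
    have hw : walsh p (comp p F (c : Fs)) 0 = ∑ x : Fn, ep p (comp p F (c : Fs) x) := by
      unfold walsh
      refine Finset.sum_congr rfl fun x _ => ?_
      rw [zero_mul, map_zero, sub_zero]
    set N : ZMod p → ℕ :=
      fun j => (Finset.filter (fun x : Fn => comp p F (c : Fs) x = j) Finset.univ).card
      with hN
    have hgrp : ∑ x : Fn, ep p (comp p F (c : Fs) x)
        = ∑ j : ZMod p, (N j : ℂ) * ep p j := by
      rw [← Fintype.sum_fiberwise' (fun x : Fn => comp p F (c : Fs) x) (fun j => ep p j)]
      refine Finset.sum_congr rfl fun j _ => ?_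
      rw [Finset.sum_const, Finset.card_univ, nsmul_eq_mul]
      congr 1
      rw [hN]
      norm_cast
      simp [Fintype.card_subtype]
    have hsum : ∑ j : ZMod p, (N j : ℂ) * ep p j
        = (ε : ℂ) * (p : ℂ) ^ (n / 2) * ep p (comp p Fstar ((σ c : Fsˣ) : Fs) 0) := by
      rw [← hgrp, ← hw]
      exact hdual c 0
    have hodd : Odd (N 0) := EpAux.parity_fiber_zero p h2 _ hgsym hg0
    have heven : ∀ j : ZMod p, j ≠ 0 → Even (N j) := fun j hj =>
      EpAux.parity_fiber_ne p h2 _ hgsym hg0 hj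
    have ht0 : comp p Fstar ((σ c : Fsˣ) : Fs) 0 = 0 :=
      EpAux.key_t_eq_zero p hp (n / 2) ε N _ hodd heven hsum
    rw [ht0, EpAux.ep_zero, mul_one] at hsum
    rw [hgrp]
    exact hsum
  -- Step D: the counting identity, over ℂ
  have hcount : ∀ i : Fs,
      ((Nat.card {x : Fn // F x = i} : ℕ) : ℂ) * (p : ℂ) ^ s
        = (p : ℂ) ^ n + (ε : ℂ) * (p : ℂ) ^ (n / 2)
            * ((if i = 0 then (p : ℂ) ^ s else 0) - 1) := by
    intro i
    have swap : ∑ c : Fs, ∑ x : Fn, ep p (Algebra.trace (ZMod p) Fs (c * (F x - i)))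
        = ((Nat.card {x : Fn // F x = i} : ℕ) : ℂ) * (p : ℂ) ^ s := by
      rw [Finset.sum_comm]
      have hx : ∀ x : Fn, ∑ c : Fs, ep p (Algebra.trace (ZMod p) Fs (c * (F x - i)))
          = if F x = i then ((p : ℂ) ^ s) else 0 := by
        intro x
        by_cases hxi : F x = i
        · rw [if_pos hxi]
          calc ∑ c : Fs, ep p (Algebra.trace (ZMod p) Fs (c * (F x - i)))
              = ∑ _c : Fs, (1 : ℂ) := by
                refine Finset.sum_congr rfl fun c _ => ?_
                rw [hxi, sub_self, mul_zero, map_zero, EpAux.ep_zero]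
            _ = (Fintype.card Fs : ℂ) := by
                rw [Finset.sum_const, Finset.card_univ, nsmul_eq_mul, mul_one]
            _ = (p : ℂ) ^ s := by rw [hcards]; push_cast; rfl
        · rw [if_neg hxi]
          exact EpAux.sum_ep_trace p Fs (sub_ne_zero.mpr hxi)
      calc ∑ x : Fn, ∑ c : Fs, ep p (Algebra.trace (ZMod p) Fs (c * (F x - i)))
          = ∑ x : Fn, (if F x = i then ((p : ℂ) ^ s) else 0) :=
            Finset.sum_congr rfl fun x _ => hx x
        _ = ∑ x ∈ Finset.filter (fun x : Fn => F x = i) Finset.univ, ((p : ℂ) ^ s) :=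
            (Finset.sum_filter _ _).symm
        _ = ((Finset.filter (fun x : Fn => F x = i) Finset.univ).card : ℂ) * (p : ℂ) ^ s := by
            rw [Finset.sum_const, nsmul_eq_mul]
        _ = ((Nat.card {x : Fn // F x = i} : ℕ) : ℂ) * (p : ℂ) ^ s := by
            congr 2
            rw [Nat.card_eq_fintype_card]
            simp [Fintype.card_subtype]
    have hsplit : ∑ c : Fs, ∑ x : Fn, ep p (Algebra.trace (ZMod p) Fs (c * (F x - i)))
        = (p : ℂ) ^ n + (ε : ℂ) * (p : ℂ) ^ (n / 2)
            * ((if i = 0 then (p : ℂ) ^ s else 0) - 1) := by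
      have hc0 : ∑ x : Fn, ep p (Algebra.trace (ZMod p) Fs ((0 : Fs) * (F x - i)))
          = (p : ℂ) ^ n := by
        calc ∑ x : Fn, ep p (Algebra.trace (ZMod p) Fs ((0 : Fs) * (F x - i)))
            = ∑ _x : Fn, (1 : ℂ) := by
              refine Finset.sum_congr rfl fun x _ => ?_
              rw [zero_mul, map_zero, EpAux.ep_zero]
          _ = (Fintype.card Fn : ℂ) := by
              rw [Finset.sum_const, Finset.card_univ, nsmul_eq_mul, mul_one]
          _ = (p : ℂ) ^ n := by rw [hcardn]; push_cast; rfl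
      have hcne : ∀ c : Fs, c ≠ 0 →
          ∑ x : Fn, ep p (Algebra.trace (ZMod p) Fs (c * (F x - i)))
            = (ε : ℂ) * (p : ℂ) ^ (n / 2)
                * ep p (Algebra.trace (ZMod p) Fs (c * (-i))) := by
        intro c hc
        have hterm : ∀ x : Fn, Algebra.trace (ZMod p) Fs (c * (F x - i))
            = comp p F c x + Algebra.trace (ZMod p) Fs (c * (-i)) := by
          intro x
          unfold comp
          rw [← map_add, sub_eq_add_neg, mul_add]
        calc ∑ x : Fn, ep p (Algebra.trace (ZMod p) Fs (c * (F x - i)))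
            = ∑ x : Fn, ep p (comp p F c x) * ep p (Algebra.trace (ZMod p) Fs (c * (-i))) := by
              refine Finset.sum_congr rfl fun x _ => ?_
              rw [hterm, EpAux.ep_add]
          _ = (∑ x : Fn, ep p (comp p F c x)) * ep p (Algebra.trace (ZMod p) Fs (c * (-i))) :=
              (Finset.sum_mul _ _ _).symm
          _ = (ε : ℂ) * (p : ℂ) ^ (n / 2) * ep p (Algebra.trace (ZMod p) Fs (c * (-i))) := by
              have hWc : (∑ x : Fn, ep p (comp p F c x)) = (ε : ℂ) * (p : ℂ) ^ (n / 2) :=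
                hW0 (Units.mk0 c hc)
              rw [hWc]
      have herase : ∑ c ∈ Finset.univ.erase (0 : Fs),
          ep p (Algebra.trace (ZMod p) Fs (c * (-i)))
            = (if i = 0 then (p : ℂ) ^ s else 0) - 1 := by
        have hfull : ∑ c : Fs, ep p (Algebra.trace (ZMod p) Fs (c * (-i)))
            = if i = 0 then (p : ℂ) ^ s else 0 := by
          by_cases hi : i = 0
          · rw [if_pos hi, hi]
            calc ∑ c : Fs, ep p (Algebra.trace (ZMod p) Fs (c * (-(0 : Fs))))
                = ∑ _c : Fs, (1 : ℂ) := by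
                  refine Finset.sum_congr rfl fun c _ => ?_
                  rw [neg_zero, mul_zero, map_zero, EpAux.ep_zero]
              _ = (Fintype.card Fs : ℂ) := by
                  rw [Finset.sum_const, Finset.card_univ, nsmul_eq_mul, mul_one]
              _ = (p : ℂ) ^ s := by rw [hcards]; push_cast; rfl
          · rw [if_neg hi]
            exact EpAux.sum_ep_trace p Fs (neg_ne_zero.mpr hi)
        have hzeroterm : ep p (Algebra.trace (ZMod p) Fs ((0 : Fs) * (-i))) = 1 := by
          rw [zero_mul, map_zero, EpAux.ep_zero]
        have hadd := Finset.add_sum_erase Finset.univ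
          (fun c : Fs => ep p (Algebra.trace (ZMod p) Fs (c * (-i))))
          (Finset.mem_univ (0 : Fs))
        rw [hzeroterm, hfull] at hadd
        linear_combination hadd
      rw [← Finset.add_sum_erase Finset.univ _ (Finset.mem_univ (0 : Fs)), hc0]
      have hrest : ∑ c ∈ Finset.univ.erase (0 : Fs),
          ∑ x : Fn, ep p (Algebra.trace (ZMod p) Fs (c * (F x - i)))
            = (ε : ℂ) * (p : ℂ) ^ (n / 2)
                * ∑ c ∈ Finset.univ.erase (0 : Fs),
                    ep p (Algebra.trace (ZMod p) Fs (c * (-i))) := by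
        rw [Finset.mul_sum]
        refine Finset.sum_congr rfl fun c hc => ?_
        exact hcne c (Finset.ne_of_mem_erase hc)
      rw [hrest, herase]
    rw [← swap]
    exact hsplit
  -- Step E: conclude
  have hpQ : (p : ℚ) ≠ 0 := Nat.cast_ne_zero.mpr (by omega)
  constructor
  · have h0 := hcount 0
    rw [if_pos rfl] at h0
    have hz : ((Nat.card {x : Fn // F x = 0} : ℤ) * (p : ℤ) ^ s : ℤ)
        = (p : ℤ) ^ n + ε * (p : ℤ) ^ (n / 2) * ((p : ℤ) ^ s - 1) := by
      exact_mod_cast h0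
    have hq : ((Nat.card {x : Fn // F x = 0} : ℚ)) * (p : ℚ) ^ s
        = (p : ℚ) ^ n + (ε : ℚ) * (p : ℚ) ^ (n / 2) * ((p : ℚ) ^ s - 1) := by
      exact_mod_cast hz
    simp only [Nat.card_eq_fintype_card] at hq ⊢
    rw [zpow_sub₀ hpQ, zpow_sub₀ hpQ, zpow_natCast, zpow_natCast, zpow_natCast]
    field_simp
    linear_combination hq
  · intro i hi
    have h0 := hcount i
    rw [if_neg hi, zero_sub] at h0
    have hz : ((Nat.card {x : Fn // F x = i} : ℤ) * (p : ℤ) ^ s : ℤ)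
        = (p : ℤ) ^ n + ε * (p : ℤ) ^ (n / 2) * (-1) := by
      exact_mod_cast h0
    have hq : ((Nat.card {x : Fn // F x = i} : ℚ)) * (p : ℚ) ^ s
        = (p : ℚ) ^ n - (ε : ℚ) * (p : ℚ) ^ (n / 2) := by
      have hq' : ((Nat.card {x : Fn // F x = i} : ℚ)) * (p : ℚ) ^ s
          = (p : ℚ) ^ n + (ε : ℚ) * (p : ℚ) ^ (n / 2) * (-1) := by exact_mod_cast hz
      linear_combination hq'
    simp only [Nat.card_eq_fintype_card] at hq ⊢
    rw [zpow_sub₀ hpQ, zpow_sub₀ hpQ, zpow_natCast, zpow_natCast, zpow_natCast]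
    field_simp
    linear_combination hq

end
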